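/- Let H_1, …, H_d > 0, let H_max = max_i H_i, and let f : ℝ^d → ℝ be given by f(x) = Σ_{i=1}^d (H_i/3)·|x_i|³. Then f is twice differentiable, its Hessian is 2H_max-Lipschitz in operator norm, i.e., ‖∇²f(x) − ∇²f(y)‖ ≤ 2H_max·‖x − y‖ for all x, y ∈ ℝ^d, and for every x ∈ ℝ^d: ⟨∇f(x), ∇²f(x)∇f(x)⟩ ≤ 2√(H_max) · ‖∇f(x)‖^{5/2}. -/

import Mathlib

open scoped RealInnerProductSpace

lemma hasDerivAt_mul_abs (t : ℝ) : HasDerivAt (fun s : ℝ => s * |s|) (2 * |t|) t := by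
  rcases lt_trichotomy t 0 with ht | rfl | ht
  · have h : HasDerivAt (fun s : ℝ => -(s * s)) (2 * |t|) t := by
      have := ((hasDerivAt_id t).mul (hasDerivAt_id t)).neg
      simpa [abs_of_neg ht, Pi.mul_def, Pi.neg_def] using this.congr_deriv (by simp only [id_eq]; ring)
    refine h.congr_of_eventuallyEq ?_
    filter_upwards [eventually_lt_nhds ht] with s hs
    rw [abs_of_neg hs]; ring
  · simp only [abs_zero, mul_zero]
    rw [hasDerivAt_iff_tendsto_slope]
    have h : ∀ s : ℝ, s ≠ 0 → slope (fun s : ℝ => s * |s|) 0 s = |s| := by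
      intro s hs
      simp [slope_def_field, hs, mul_comm, mul_div_assoc]
    refine Filter.Tendsto.congr' ?_
      ((continuous_abs.tendsto' 0 0 abs_zero).mono_left nhdsWithin_le_nhds)
    filter_upwards [self_mem_nhdsWithin] with s hs
    exact (h s hs).symm
  · have h : HasDerivAt (fun s : ℝ => s * s) (2 * |t|) t := by
      have := (hasDerivAt_id t).mul (hasDerivAt_id t)
      simpa [abs_of_pos ht, Pi.mul_def] using this.congr_deriv (by simp only [id_eq]; ring)
    refine h.congr_of_eventuallyEq ?_
    filter_upwards [eventually_gt_nhds ht] with s hs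
    rw [abs_of_pos hs]

lemma hasDerivAt_cube_abs (c t : ℝ) :
    HasDerivAt (fun s : ℝ => c / 3 * |s| ^ 3) (c * (t * |t|)) t := by
  have h1 : HasDerivAt (fun s : ℝ => s * (s * |s|)) (3 * (t * |t|)) t := by
    have := (hasDerivAt_id t).mul (hasDerivAt_mul_abs t)
    simpa [Pi.mul_def] using this.congr_deriv (by simp only [id_eq]; ring)
  have h2 := (h1.const_mul (c / 3)).congr_deriv (by ring : c / 3 * (3 * (t * |t|)) = c * (t * |t|))
  refine h2.congr_of_eventuallyEq ?_
  filter_upwards with s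
  have hs : |s| ^ 3 = s * (s * |s|) := by
    rw [pow_succ, sq_abs]; ring
  rw [hs]

lemma euclid_coord_le {d : ℕ} (z : EuclideanSpace ℝ (Fin d)) (i : Fin d) : |z i| ≤ ‖z‖ := by
  rw [EuclideanSpace.norm_eq]
  have : |z i| = Real.sqrt (‖z i‖ ^ 2) := by
    rw [Real.sqrt_sq_eq_abs]; simp
  rw [this]
  apply Real.sqrt_le_sqrt
  exact Finset.single_le_sum (f := fun j => ‖z j‖ ^ 2) (fun j _ => by positivity) (Finset.mem_univ i)

theorem separable_cubic_properties {d : ℕ} (H : Fin d → ℝ) (hH : ∀ i, 0 < H i)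
    (Hmax : ℝ) (hle : ∀ i, H i ≤ Hmax) (hmem : ∃ i, Hmax = H i)
    (f : EuclideanSpace ℝ (Fin d) → ℝ)
    (hf : ∀ x, f x = ∑ i, (H i / 3) * |x i|^3) :
    (Differentiable ℝ f ∧ Differentiable ℝ (gradient f)) ∧
    (∀ x y : EuclideanSpace ℝ (Fin d),
      ‖fderiv ℝ (gradient f) x - fderiv ℝ (gradient f) y‖ ≤ 2 * Hmax * ‖x - y‖) ∧
    (∀ x : EuclideanSpace ℝ (Fin d),
      ⟪gradient f x, fderiv ℝ (gradient f) x (gradient f x)⟫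
        ≤ 2 * Real.sqrt Hmax * ‖gradient f x‖ ^ ((5:ℝ)/2)) := by
  classical
  obtain ⟨i₀, hi₀⟩ := hmem
  have hHmax : 0 < Hmax := hi₀ ▸ hH i₀
  have hfe : f = fun x => ∑ i, (H i / 3) * |x i| ^ 3 := funext hf
  subst hfe
  have hE : True := trivial
  set g : EuclideanSpace ℝ (Fin d) → EuclideanSpace ℝ (Fin d) := fun x =>
    (WithLp.equiv 2 (Fin d → ℝ)).symm (fun i => H i * (x i * |x i|)) with hg
  set A : EuclideanSpace ℝ (Fin d) → (EuclideanSpace ℝ (Fin d) →L[ℝ] EuclideanSpace ℝ (Fin d)) :=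
    fun x => (((PiLp.continuousLinearEquiv 2 ℝ (fun _ : Fin d => ℝ)).symm :
        (Fin d → ℝ) →L[ℝ] EuclideanSpace ℝ (Fin d))).comp
      (ContinuousLinearMap.pi fun i => (2 * H i * |x i|) •
        (EuclideanSpace.proj i : EuclideanSpace ℝ (Fin d) →L[ℝ] ℝ))
    with hA
  -- gradient computation
  have hgrad : ∀ x : EuclideanSpace ℝ (Fin d), HasGradientAt (fun x : EuclideanSpace ℝ (Fin d) => ∑ i, (H i / 3) * |x i| ^ 3) (g x) x := by
    intro x
    rw [hasGradientAt_iff_hasFDerivAt]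
    have hL : HasFDerivAt (fun x : EuclideanSpace ℝ (Fin d) => ∑ i, (H i / 3) * |x i| ^ 3)
        (∑ i, (H i * (x i * |x i|)) • (EuclideanSpace.proj i : EuclideanSpace ℝ (Fin d) →L[ℝ] ℝ)) x := by
      apply HasFDerivAt.fun_sum (A := fun i (x : EuclideanSpace ℝ (Fin d)) => (H i / 3) * |x i| ^ 3)
      intro i _
      have := (hasDerivAt_cube_abs (H i) (x i)).comp_hasFDerivAt x
        (EuclideanSpace.proj i : EuclideanSpace ℝ (Fin d) →L[ℝ] ℝ).hasFDerivAt
      exact this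
    refine hL.congr_fderiv ?_
    ext v
    simp [g, PiLp.inner_apply, RCLike.inner_apply, PiLp.proj_apply,
      ContinuousLinearMap.sum_apply, PiLp.continuousLinearEquiv_symm_apply,
      WithLp.equiv_symm_apply, PiLp.toLp_apply]
    exact Finset.sum_congr rfl fun i _ => mul_comm _ _
  have hgradeq : gradient (fun x : EuclideanSpace ℝ (Fin d) => ∑ i, (H i / 3) * |x i| ^ 3) = g :=
    funext fun x => (hgrad x).gradient
  -- Hessian computation
  have hg' : ∀ x : EuclideanSpace ℝ (Fin d), HasFDerivAt g (A x) x := by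
    intro x
    have hpi : HasFDerivAt (fun x : EuclideanSpace ℝ (Fin d) => (fun i => H i * (x i * |x i|)))
        (ContinuousLinearMap.pi fun i => (2 * H i * |x i|) • (EuclideanSpace.proj i : EuclideanSpace ℝ (Fin d) →L[ℝ] ℝ))
        x := by
      apply hasFDerivAt_pi.2
      intro i
      have hc : HasDerivAt (fun t : ℝ => H i * (t * |t|)) (H i * (2 * |x i|)) (x i) :=
        (hasDerivAt_mul_abs (x i)).const_mul (H i)
      have := hc.comp_hasFDerivAt x (EuclideanSpace.proj i : EuclideanSpace ℝ (Fin d) →L[ℝ] ℝ).hasFDerivAt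
      rw [show (2 : ℝ) * H i * |x i| = H i * (2 * |x i|) from by ring]
      exact this
    exact (((PiLp.continuousLinearEquiv 2 ℝ (fun _ : Fin d => ℝ)).symm :
      (Fin d → ℝ) →L[ℝ] EuclideanSpace ℝ (Fin d)).hasFDerivAt).comp x hpi
  have hfd : ∀ x : EuclideanSpace ℝ (Fin d), fderiv ℝ (gradient (fun x : EuclideanSpace ℝ (Fin d) => ∑ i, (H i / 3) * |x i| ^ 3)) x = A x := by
    intro x
    rw [hgradeq]
    exact (hg' x).fderiv
  refine ⟨⟨fun x => (hgrad x).differentiableAt, ?_⟩, ?_, ?_⟩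
  · rw [hgradeq]; exact fun x => (hg' x).differentiableAt
  · -- Lipschitz Hessian
    intro x y
    rw [hfd x, hfd y]
    apply ContinuousLinearMap.opNorm_le_bound _ (by positivity)
    intro v
    have happ : ∀ i, ((A x - A y) v) i = 2 * H i * (|x i| - |y i|) * v i := by
      intro i
      simp [hA, ContinuousLinearMap.sub_apply, PiLp.sub_apply, PiLp.continuousLinearEquiv_symm_apply,
        WithLp.equiv_symm_apply, PiLp.toLp_apply, PiLp.proj_apply, PiLp.sub_apply]
      ring
    have hnv : ‖(A x - A y) v‖ = Real.sqrt (∑ i, (2 * H i * (|x i| - |y i|) * v i) ^ 2) := by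
      rw [EuclideanSpace.norm_eq]
      congr 1
      refine Finset.sum_congr rfl fun i _ => ?_
      rw [happ i, Real.norm_eq_abs, sq_abs]
    rw [hnv]
    have hbound : ∑ i, (2 * H i * (|x i| - |y i|) * v i) ^ 2
        ≤ (2 * Hmax * ‖x - y‖) ^ 2 * ∑ i, ‖v i‖ ^ 2 := by
      rw [Finset.mul_sum]
      refine Finset.sum_le_sum fun i _ => ?_
      have h1 : |(|x i| - |y i|)| ≤ ‖x - y‖ := by
        refine le_trans (abs_abs_sub_abs_le_abs_sub _ _) ?_
        have : x i - y i = (x - y) i := by simp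
        rw [this]
        exact euclid_coord_le (x - y) i
      have h2 : (2 * H i * (|x i| - |y i|)) ^ 2 ≤ (2 * Hmax * ‖x - y‖) ^ 2 := by
        rw [mul_pow, mul_pow, mul_pow, mul_pow]
        have hH2 : (H i) ^ 2 ≤ Hmax ^ 2 := by
          apply pow_le_pow_left₀ (le_of_lt (hH i)) (hle i)
        have hA2 : (|x i| - |y i|) ^ 2 ≤ ‖x - y‖ ^ 2 := by
          rw [← sq_abs]
          apply pow_le_pow_left₀ (abs_nonneg _) h1
        have := mul_le_mul hH2 hA2 (by positivity) (by positivity)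
        nlinarith [sq_nonneg (H i), sq_nonneg ‖x - y‖]
      calc (2 * H i * (|x i| - |y i|) * v i) ^ 2
          = (2 * H i * (|x i| - |y i|)) ^ 2 * (v i) ^ 2 := by ring
        _ ≤ (2 * Hmax * ‖x - y‖) ^ 2 * (v i) ^ 2 := by
            apply mul_le_mul_of_nonneg_right h2 (sq_nonneg _)
        _ = (2 * Hmax * ‖x - y‖) ^ 2 * ‖v i‖ ^ 2 := by
            rw [Real.norm_eq_abs, sq_abs]
    calc Real.sqrt (∑ i, (2 * H i * (|x i| - |y i|) * v i) ^ 2)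
        ≤ Real.sqrt ((2 * Hmax * ‖x - y‖) ^ 2 * ∑ i, ‖v i‖ ^ 2) := Real.sqrt_le_sqrt hbound
      _ = (2 * Hmax * ‖x - y‖) * Real.sqrt (∑ i, ‖v i‖ ^ 2) := by
          rw [Real.sqrt_mul (sq_nonneg _), Real.sqrt_sq (by positivity)]
      _ = 2 * Hmax * ‖x - y‖ * ‖v‖ := by rw [← EuclideanSpace.norm_eq]
  · -- curvature bound
    intro x
    rw [hfd x, hgradeq]
    have hApply : ∀ i, (A x (g x)) i = 2 * H i * |x i| * (H i * (x i * |x i|)) := by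
      intro i
      simp [hA, hg, PiLp.continuousLinearEquiv_symm_apply, WithLp.equiv_symm_apply, PiLp.toLp_apply,
        PiLp.proj_apply]
    have hgi : ∀ i, (g x) i = H i * (x i * |x i|) := by
      intro i
      simp [hg, PiLp.continuousLinearEquiv_symm_apply, WithLp.equiv_symm_apply, PiLp.toLp_apply]
    have hinner : ⟪g x, A x (g x)⟫ = ∑ i, 2 * (H i) ^ 3 * |x i| ^ 5 := by
      rw [PiLp.inner_apply]
      refine Finset.sum_congr rfl fun i _ => ?_
      rw [RCLike.inner_apply, conj_trivial, hApply i, hgi i]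
      have hx2 : x i ^ 2 = |x i| ^ 2 := (sq_abs (x i)).symm
      linear_combination (2 * H i ^ 3 * |x i| ^ 3) * hx2
    rw [hinner]
    set a : Fin d → ℝ := fun i => (H i) ^ 2 * |x i| ^ 4 with ha
    have ha0 : ∀ i, 0 ≤ a i := fun i => by simp only [ha]; positivity
    set S : ℝ := ∑ i, a i with hS
    have hS0 : 0 ≤ S := Finset.sum_nonneg fun i _ => ha0 i
    have hnorm : ‖g x‖ = Real.sqrt S := by
      rw [EuclideanSpace.norm_eq]
      congr 1
      refine Finset.sum_congr rfl fun i _ => ?_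
      rw [hgi i, Real.norm_eq_abs, sq_abs]
      simp only [ha]
      have hx2 : x i ^ 2 = |x i| ^ 2 := (sq_abs (x i)).symm
      linear_combination (H i ^ 2 * |x i| ^ 2) * hx2
    have hrpow : ‖g x‖ ^ ((5:ℝ)/2) = S ^ ((5:ℝ)/4) := by
      rw [hnorm, Real.sqrt_eq_rpow, ← Real.rpow_mul hS0]
      norm_num
    rw [hrpow]
    have hterm : ∀ i, 2 * H i ^ 3 * |x i| ^ 5
        ≤ 2 * Real.sqrt Hmax * (S ^ ((1:ℝ)/4) * a i) := by
      intro i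
      have h4 : a i = (Real.sqrt (H i) * |x i|) ^ (4:ℕ) := by
        simp only [ha]
        rw [mul_pow, show (Real.sqrt (H i)) ^ (4:ℕ) = ((Real.sqrt (H i)) ^ 2) ^ 2 from by ring,
          Real.sq_sqrt (hH i).le]
      have hq : a i ^ ((1:ℝ)/4) = Real.sqrt (H i) * |x i| := by
        rw [h4, show ((1:ℝ)/4) = ((4:ℕ):ℝ)⁻¹ from by norm_num,
          Real.pow_rpow_inv_natCast (by positivity) (by norm_num)]
      have hval : 2 * H i ^ 3 * |x i| ^ 5 = 2 * Real.sqrt (H i) * (a i ^ ((1:ℝ)/4) * a i) := by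
        rw [hq]
        simp only [ha]
        have hs := Real.mul_self_sqrt (hH i).le
        linear_combination (-2 * |x i| ^ 5 * H i ^ 2) * hs
      rw [hval]
      have h1 : Real.sqrt (H i) ≤ Real.sqrt Hmax := Real.sqrt_le_sqrt (hle i)
      have h2 : a i ^ ((1:ℝ)/4) ≤ S ^ ((1:ℝ)/4) := by
        apply Real.rpow_le_rpow (ha0 i) _ (by norm_num)
        exact Finset.single_le_sum (fun j _ => ha0 j) (Finset.mem_univ i)
      have hmul : a i ^ ((1:ℝ)/4) * a i ≤ S ^ ((1:ℝ)/4) * a i :=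
        mul_le_mul_of_nonneg_right h2 (ha0 i)
      have hfin : Real.sqrt (H i) * (a i ^ ((1:ℝ)/4) * a i)
          ≤ Real.sqrt Hmax * (S ^ ((1:ℝ)/4) * a i) :=
        mul_le_mul h1 hmul (mul_nonneg (Real.rpow_nonneg (ha0 i) _) (ha0 i))
          (Real.sqrt_nonneg _)
      linarith
    calc ∑ i, 2 * H i ^ 3 * |x i| ^ 5
        ≤ ∑ i, 2 * Real.sqrt Hmax * (S ^ ((1:ℝ)/4) * a i) :=
          Finset.sum_le_sum fun i _ => hterm i
      _ = 2 * Real.sqrt Hmax * (S ^ ((1:ℝ)/4) * S) := by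
          rw [← Finset.mul_sum, ← Finset.mul_sum, ← hS]
      _ = 2 * Real.sqrt Hmax * S ^ ((5:ℝ)/4) := by
          congr 1
          rw [show ((5:ℝ)/4) = (1:ℝ)/4 + 1 from by norm_num,
            Real.rpow_add' hS0 (by norm_num), Real.rpow_one]
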